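/- Let G be a Gibonacci sequence and let p ≥ 2 and m ≥ p be natural numbers. Then Σ_{k=2p}^{m} C(k−p−1, p−1) · G_{m−k} + Σ_{t=0}^{p−1} ( G_1 · C(m−t−1, t) + G_0 · C(m−t−1, t−1) ) = G_m. -/
import Mathlib

/-- Binomial coefficient `C a b` with an integer lower index, with the
convention that it vanishes for negative lower index. -/
def C (a : ℕ) (b : ℤ) : ℤ := if 0 ≤ b then (a.choose b.toNat : ℤ) else 0

lemma C_ofNat (a t : ℕ) : C a (t : ℤ) = (a.choose t : ℤ) := by simp [C]

lemma C_neg (a : ℕ) {b : ℤ} (hb : b < 0) : C a b = 0 := by simp [C, not_le.2 hb]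

lemma C_pascal (a : ℕ) (b : ℤ) : C (a + 1) b = C a b + C a (b - 1) := by
  rcases lt_trichotomy b 0 with h | h | h
  · rw [C_neg _ h, C_neg _ h, C_neg _ (by omega)]; ring
  · subst h; norm_num [C]
  · obtain ⟨t, rfl⟩ : ∃ t : ℕ, b = (t : ℤ) + 1 := ⟨(b - 1).toNat, by omega⟩
    have h1 : (t : ℤ) + 1 - 1 = (t : ℤ) := by ring
    have h2 : ((t : ℤ) + 1) = ((t + 1 : ℕ) : ℤ) := by push_cast; ring
    rw [h1, h2, C_ofNat, C_ofNat, C_ofNat, Nat.choose_succ_succ]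
    push_cast; ring

lemma diag : ∀ m : ℕ, ∀ q : ℕ, 1 ≤ m → m ≤ 2 * q →
    ∑ t ∈ Finset.range q, C (m - 1 - t) (t : ℤ) = (Nat.fib m : ℤ) := by
  intro m
  induction m using Nat.strong_induction_on with
  | _ m ih =>
    intro q h1 h2
    match m, h1 with
    | 1, _ =>
      rw [Finset.sum_eq_single_of_mem 0 (Finset.mem_range.2 (by omega))]
      · norm_num [C]
      · intro t _ ht
        have e : 1 - 1 - t = 0 := by omega
        rw [e, C_ofNat, Nat.choose_eq_zero_of_lt (by omega)]; norm_num
    | 2, _ =>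
      rw [Finset.sum_eq_single_of_mem 0 (Finset.mem_range.2 (by omega))]
      · norm_num [C]
      · intro t _ ht
        rw [C_ofNat, Nat.choose_eq_zero_of_lt (by omega)]; norm_num
    | (n+3), _ =>
      have hq : 2 ≤ q := by omega
      obtain ⟨q', rfl⟩ : ∃ q', q = q' + 1 := ⟨q - 1, by omega⟩
      have step : ∀ t : ℕ, C (n + 3 - 1 - t) (t : ℤ)
          = C (n + 1 - t) (t : ℤ) + C (n + 1 - t) ((t : ℤ) - 1) := by
        intro t
        rcases le_or_gt t (n + 1) with h | h
        · have e : n + 3 - 1 - t = (n + 1 - t) + 1 := by omega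
          rw [e, C_pascal]
        · have e1 : n + 3 - 1 - t = 0 := by omega
          have e2 : n + 1 - t = 0 := by omega
          have e3 : (t : ℤ) - 1 = ((t - 1 : ℕ) : ℤ) := by omega
          rw [e1, e2, e3, C_ofNat, C_ofNat,
            Nat.choose_eq_zero_of_lt (show 0 < t - 1 by omega)]
          norm_num
      rw [Finset.sum_congr rfl (fun t _ => step t), Finset.sum_add_distrib]
      have first : ∑ t ∈ Finset.range (q' + 1), C (n + 1 - t) (t : ℤ)
          = (Nat.fib (n + 2) : ℤ) := by
        have := ih (n + 2) (by omega) (q' + 1) (by omega) (by omega)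
        rw [← this]
        exact Finset.sum_congr rfl (fun t _ => by rw [show n + 2 - 1 - t = n + 1 - t from by omega])
      have second : ∑ t ∈ Finset.range (q' + 1), C (n + 1 - t) ((t : ℤ) - 1)
          = (Nat.fib (n + 1) : ℤ) := by
        rw [Finset.sum_range_succ']
        have f0 : C (n + 1 - 0) ((0 : ℕ) - 1 : ℤ) = 0 := C_neg _ (by norm_num)
        have shift : ∀ s : ℕ, C (n + 1 - (s + 1)) (((s + 1 : ℕ) : ℤ) - 1)
            = C (n + 1 - 1 - s) (s : ℤ) := by
          intro s
          have e1 : n + 1 - (s + 1) = n + 1 - 1 - s := by omega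
          have e2 : (((s + 1 : ℕ) : ℤ)) - 1 = (s : ℤ) := by push_cast; ring
          rw [e1, e2]
        rw [Finset.sum_congr rfl (fun s _ => shift s),
          ih (n + 1) (by omega) q' (by omega) (by omega)]
        simpa using f0
      rw [first, second, show Nat.fib (n+3) = Nat.fib (n+2) + Nat.fib (n+1) from by rw [Nat.fib_add_two]; ring]
      push_cast; ring

lemma G_fib (G : ℕ → ℤ) (hG : ∀ n, G (n + 2) = G (n + 1) + G n) :
    ∀ n : ℕ, G (n + 1) = G 1 * Nat.fib (n + 1) + G 0 * Nat.fib n := by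
  intro n
  induction n using Nat.strong_induction_on with
  | _ n ih =>
    match n with
    | 0 => simp
    | 1 => rw [hG 0]; norm_num [Nat.fib]
    | (k+2) =>
      have e : k + 2 + 1 = k + 1 + 2 := by ring
      have f1 : ((Nat.fib (k + 1 + 2) : ℕ) : ℤ) = Nat.fib (k + 1) + Nat.fib (k + 1 + 1) := by
        rw [Nat.fib_add_two]; push_cast; ring
      have f2 : ((Nat.fib (k + 2) : ℕ) : ℤ) = Nat.fib k + Nat.fib (k + 1) := by
        rw [Nat.fib_add_two]; push_cast; ring
      rw [e, hG (k + 1), ih (k + 1) (by omega), ih k (by omega), f1, f2]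
      ring

lemma key (G : ℕ → ℤ) (hG : ∀ n, G (n + 2) = G (n + 1) + G n)
    (q : ℕ) (hq : 2 ≤ q) :
    ∀ m : ℕ, q ≤ m →
    (∑ k ∈ Finset.range (m + 1), C (k - q - 1) ((q : ℤ) - 1) * G (m - k)) +
      (∑ t ∈ Finset.range q,
        (G 1 * C (m - t - 1) (t : ℤ) + G 0 * C (m - t - 1) ((t : ℤ) - 1))) = G m := by
  have hcast : (q : ℤ) - 1 = ((q - 1 : ℕ) : ℤ) := by omega
  intro m
  induction m using Nat.strong_induction_on with
  | _ m ih =>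
    intro hm
    by_cases h0 : m = q
    · rw [h0]
      have first0 : ∑ k ∈ Finset.range (q + 1), C (k - q - 1) ((q : ℤ) - 1) * G (q - k) = 0 := by
        apply Finset.sum_eq_zero
        intro k hk
        have hk2 : k < q + 1 := Finset.mem_range.1 hk
        have : k - q - 1 = 0 := by omega
        rw [this, hcast, C_ofNat, Nat.choose_eq_zero_of_lt (by omega)]
        ring
      have part1 : ∑ t ∈ Finset.range q, C (q - t - 1) (t : ℤ) = (Nat.fib q : ℤ) := by
        rw [← diag q q (by omega) (by omega)]
        exact Finset.sum_congr rfl (fun t _ => by rw [show q - t - 1 = q - 1 - t from by omega])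
      have part2 : ∑ t ∈ Finset.range q, C (q - t - 1) ((t : ℤ) - 1) = (Nat.fib (q - 1) : ℤ) := by
        obtain ⟨q', rfl⟩ : ∃ q', q = q' + 1 := ⟨q - 1, by omega⟩
        rw [Finset.sum_range_succ']
        have shift : ∀ s : ℕ, C (q' + 1 - (s + 1) - 1) (((s + 1 : ℕ) : ℤ) - 1)
            = C (q' + 1 - 1 - 1 - s) (s : ℤ) := by
          intro s
          rw [show q' + 1 - (s + 1) - 1 = q' + 1 - 1 - 1 - s from by omega,
            show (((s + 1 : ℕ) : ℤ)) - 1 = (s : ℤ) from by push_cast; ring]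
        rw [Finset.sum_congr rfl (fun s _ => shift s)]
        have : ∑ s ∈ Finset.range q', C (q' - 1 - s) (s : ℤ) = (Nat.fib q' : ℤ) :=
          diag q' q' (by omega) (by omega)
        simp only [show q' + 1 - 1 - 1 = q' - 1 from by omega, show q' + 1 - 1 = q' from by omega,
          show q' + 1 - (0 + 1) - 1 = q' - 1 from by omega] at *
        rw [this, C_neg _ (by norm_num)]
        ring
      have hGp := G_fib G hG (q - 1)
      rw [show q - 1 + 1 = q from by omega] at hGp
      rw [first0, Finset.sum_add_distrib, ← Finset.mul_sum, ← Finset.mul_sum, part1, part2, hGp]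
      ring
    · by_cases h1 : m = q + 1
      · rw [h1]
        have first0 : ∑ k ∈ Finset.range (q + 1 + 1),
            C (k - q - 1) ((q : ℤ) - 1) * G (q + 1 - k) = 0 := by
          apply Finset.sum_eq_zero
          intro k hk
          have hk' : k < q + 1 + 1 := Finset.mem_range.1 hk
          have e : k - q - 1 = 0 := by omega
          rw [e, hcast, C_ofNat, Nat.choose_eq_zero_of_lt (by omega)]
          ring
        have part1 : ∑ t ∈ Finset.range q, C (q + 1 - t - 1) (t : ℤ)
            = (Nat.fib (q + 1) : ℤ) := by
          rw [← diag (q + 1) q (by omega) (by omega)]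
          exact Finset.sum_congr rfl
            (fun t _ => by rw [show q + 1 - t - 1 = q + 1 - 1 - t from by omega])
        have part2 : ∑ t ∈ Finset.range q, C (q + 1 - t - 1) ((t : ℤ) - 1)
            = (Nat.fib q : ℤ) := by
          obtain ⟨q', rfl⟩ : ∃ q', q = q' + 1 := ⟨q - 1, by omega⟩
          rw [Finset.sum_range_succ']
          have shift : ∀ s : ℕ, C (q' + 1 + 1 - (s + 1) - 1) (((s + 1 : ℕ) : ℤ) - 1)
              = C (q' + 1 - 1 - s) (s : ℤ) := by
            intro s
            rw [show q' + 1 + 1 - (s + 1) - 1 = q' + 1 - 1 - s from by omega,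
              show (((s + 1 : ℕ) : ℤ)) - 1 = (s : ℤ) from by push_cast; ring]
          rw [Finset.sum_congr rfl (fun s _ => shift s),
            diag (q' + 1) q' (by omega) (by omega)]
          have f0 : C (q' + 1 + 1 - 0 - 1) (((0 : ℕ) : ℤ) - 1) = 0 := C_neg _ (by norm_num)
          rw [f0]
          ring
        have hGp := G_fib G hG q
        rw [first0, Finset.sum_add_distrib, ← Finset.mul_sum, ← Finset.mul_sum,
          part1, part2, hGp]
        ring
      · obtain ⟨n, hn, rfl⟩ : ∃ n, q ≤ n ∧ m = n + 2 := ⟨m - 2, by omega, by omega⟩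
        have IH1 := ih n (by omega) hn
        have IH2 := ih (n + 1) (by omega) (by omega)
        have eIH2 : ∀ t : ℕ, n + 1 - t - 1 = n - t := fun t => by omega
        simp only [eIH2] at IH2
        have egoal : ∀ t : ℕ, n + 2 - t - 1 = n + 1 - t := fun t => by omega
        simp only [egoal]
        have h1 : (∑ k ∈ Finset.range (n + 2 + 1), C (k - q - 1) ((q : ℤ) - 1) * G (n + 2 - k))
            = (∑ k ∈ Finset.range (n + 1), C (k - q - 1) ((q : ℤ) - 1) * G (n + 2 - k))
              + C (n - q) ((q : ℤ) - 1) * G 1 + C (n - q) ((q : ℤ) - 1) * G 0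
              + C (n - q) ((q : ℤ) - 2) * G 0 := by
          rw [show n + 2 + 1 = n + 1 + 1 + 1 from by ring, Finset.sum_range_succ,
            Finset.sum_range_succ,
            show n + 2 - (n + 1 + 1) = 0 from by omega, show n + 2 - (n + 1) = 1 from by omega,
            show n + 1 + 1 - q - 1 = (n - q) + 1 from by omega,
            show n + 1 - q - 1 = n - q from by omega, C_pascal,
            show (q : ℤ) - 1 - 1 = (q : ℤ) - 2 from by ring]
          ring
        have h2 : (∑ k ∈ Finset.range (n + 1), C (k - q - 1) ((q : ℤ) - 1) * G (n + 2 - k))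
            = (∑ k ∈ Finset.range (n + 1), C (k - q - 1) ((q : ℤ) - 1) * G (n + 1 - k))
              + (∑ k ∈ Finset.range (n + 1), C (k - q - 1) ((q : ℤ) - 1) * G (n - k)) := by
          rw [← Finset.sum_add_distrib]
          refine Finset.sum_congr rfl fun k hk => ?_
          have hk2 : k < n + 1 := Finset.mem_range.1 hk
          rw [show n + 2 - k = (n - k) + 2 from by omega,
            show n + 1 - k = (n - k) + 1 from by omega, hG (n - k)]
          ring
        have h3 : (∑ k ∈ Finset.range (n + 1 + 1), C (k - q - 1) ((q : ℤ) - 1) * G (n + 1 - k))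
            = (∑ k ∈ Finset.range (n + 1), C (k - q - 1) ((q : ℤ) - 1) * G (n + 1 - k))
              + C (n - q) ((q : ℤ) - 1) * G 0 := by
          rw [Finset.sum_range_succ, show n + 1 - (n + 1) = 0 from by omega,
            show n + 1 - q - 1 = n - q from by omega]
        have h5 : (∑ t ∈ Finset.range q,
              (G 1 * C (n + 1 - t) (t : ℤ) + G 0 * C (n + 1 - t) ((t : ℤ) - 1)))
            = (∑ t ∈ Finset.range q, (G 1 * C (n - t) (t : ℤ) + G 0 * C (n - t) ((t : ℤ) - 1)))
              + (∑ t ∈ Finset.range q,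
                (G 1 * C (n - t) ((t : ℤ) - 1) + G 0 * C (n - t) ((t : ℤ) - 2))) := by
          rw [← Finset.sum_add_distrib]
          refine Finset.sum_congr rfl fun t ht => ?_
          have ht2 : t < q := Finset.mem_range.1 ht
          rw [show n + 1 - t = (n - t) + 1 from by omega, C_pascal, C_pascal,
            show (t : ℤ) - 1 - 1 = (t : ℤ) - 2 from by ring]
          ring
        have h67 : (∑ t ∈ Finset.range q,
              (G 1 * C (n - t) ((t : ℤ) - 1) + G 0 * C (n - t) ((t : ℤ) - 2)))
            = (∑ t ∈ Finset.range q,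
                (G 1 * C (n - t - 1) (t : ℤ) + G 0 * C (n - t - 1) ((t : ℤ) - 1)))
              - (G 1 * C (n - q) ((q : ℤ) - 1) + G 0 * C (n - q) ((q : ℤ) - 2)) := by
          obtain ⟨q', rfl⟩ : ∃ q', q = q' + 1 := ⟨q - 1, by omega⟩
          rw [Finset.sum_range_succ', Finset.sum_range_succ]
          have hcongr : ∀ s ∈ Finset.range q',
              (G 1 * C (n - (s + 1)) (((s + 1 : ℕ) : ℤ) - 1)
                + G 0 * C (n - (s + 1)) (((s + 1 : ℕ) : ℤ) - 2))
              = (G 1 * C (n - s - 1) (s : ℤ) + G 0 * C (n - s - 1) ((s : ℤ) - 1)) := by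
            intro s _
            rw [show n - (s + 1) = n - s - 1 from by omega,
              show (((s + 1 : ℕ) : ℤ)) - 1 = (s : ℤ) from by push_cast; ring,
              show (((s + 1 : ℕ) : ℤ)) - 2 = (s : ℤ) - 1 from by push_cast; ring]
          rw [Finset.sum_congr rfl hcongr,
            show n - (q' + 1) = n - q' - 1 from by omega,
            show (((q' + 1 : ℕ) : ℤ)) - 1 = (q' : ℤ) from by push_cast; ring,
            show (((q' + 1 : ℕ) : ℤ)) - 2 = (q' : ℤ) - 1 from by push_cast; ring,
            C_neg (n - 0) (show ((0 : ℕ) : ℤ) - 1 < 0 from by norm_num),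
            C_neg (n - 0) (show ((0 : ℕ) : ℤ) - 2 < 0 from by norm_num)]
          ring
        rw [h3] at IH2
        rw [h1, h2, h5, h67]
        linarith [IH1, IH2, hG n]

theorem gibonacci_pth_horizontal_single (G : ℕ → ℤ)
    (hG : ∀ n, G (n + 2) = G (n + 1) + G n)
    (p m : ℕ) (hp : 2 ≤ p) (hm : p ≤ m) :
    (∑ k ∈ Finset.Icc (2 * p) m, C (k - p - 1) ((p : ℤ) - 1) * G (m - k)) +
      (∑ t ∈ Finset.range p,
        (G 1 * C (m - t - 1) (t : ℤ) + G 0 * C (m - t - 1) ((t : ℤ) - 1))) = G m := by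
  have hsub : Finset.Icc (2 * p) m ⊆ Finset.range (m + 1) := by
    intro k hk
    exact Finset.mem_range.2 (by have := (Finset.mem_Icc.1 hk).2; omega)
  have hzero : ∀ k ∈ Finset.range (m + 1), k ∉ Finset.Icc (2 * p) m →
      C (k - p - 1) ((p : ℤ) - 1) * G (m - k) = 0 := by
    intro k hk hk'
    have hk2 : k < m + 1 := Finset.mem_range.1 hk
    have hklt : k < 2 * p := by
      rcases Finset.mem_Icc.not.1 hk' with h
      omega
    rw [show (p : ℤ) - 1 = ((p - 1 : ℕ) : ℤ) from by omega, C_ofNat,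
      Nat.choose_eq_zero_of_lt (by omega)]
    ring
  rw [Finset.sum_subset hsub hzero]
  exact key G hG p hp m hm
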